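/- Let G be a simple graph with maximum degree Δ ≥ 4, and let H be the subgraph of G induced by the vertices of degree less than Δ/3. Suppose H has no isolated edges, and suppose there exists a proper edge coloring c of G with color set {1, …, Δ+300} such that S_c(u) ≠ S_c(v) for every pair of adjacent vertices u and v both of degree at least Δ/3. Then G has an avd-coloring with color set {1, …, Δ+300}, i.e., a proper edge coloring c' with these colors such that S_{c'}(u) ≠ S_{c'}(v) for every pair of adjacent vertices u and v. -/

import Mathlib

set_option linter.unusedSectionVars false
set_option linter.unusedVariables false

namespace AVD

open Finset SimpleGraph

variable {V : Type*} [Fintype V] [DecidableEq V]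

noncomputable def idx (v : V) : ℕ := ((Fintype.equivFin V) v : ℕ)

lemma idx_lt (v : V) : idx v < Fintype.card V := ((Fintype.equivFin V) v).is_lt

lemma idx_inj {a b : V} (h : idx a = idx b) : a = b := by
  have := (Fintype.equivFin V).injective (Fin.val_injective h)
  exact this

def BB (V : Type*) [Fintype V] : ℕ := Fintype.card V + 1

lemma BB_pos : 0 < BB V := Nat.succ_pos _

variable (G : SimpleGraph V) [DecidableRel G.Adj] (Δ : ℕ)

def NH (v : V) : Finset V :=
  (G.neighborFinset v).filter fun w => 3 * G.degree w < Δ ∧ 3 * G.degree v < Δ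

lemma mem_NH {v w : V} :
    w ∈ NH G Δ v ↔ G.Adj v w ∧ 3 * G.degree w < Δ ∧ 3 * G.degree v < Δ := by
  simp [NH, mem_filter, mem_neighborFinset]

lemma NH_symm {v w : V} (h : w ∈ NH G Δ v) : v ∈ NH G Δ w := by
  rcases (mem_NH G Δ).1 h with ⟨ha, h1, h2⟩
  exact (mem_NH G Δ).2 ⟨ha.symm, h2, h1⟩

lemma NH_ne {v w : V} (h : w ∈ NH G Δ v) : w ≠ v :=
  fun he => G.loopless.irrefl v (he ▸ ((mem_NH G Δ).1 h).1)

lemma NH_adj {v w : V} (h : w ∈ NH G Δ v) : G.Adj v w := ((mem_NH G Δ).1 h).1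

lemma NH_mem_nbr {v w : V} (h : w ∈ NH G Δ v) : w ∈ G.neighborFinset v := by
  rw [mem_neighborFinset]; exact NH_adj G Δ h

def Hgr : SimpleGraph V where
  Adj u v := v ∈ NH G Δ u
  symm := ⟨fun u v h => NH_symm G Δ h⟩
  loopless := ⟨fun v h => (NH_ne G Δ h) rfl⟩

lemma Hgr_adj {u v : V} : (Hgr G Δ).Adj u v ↔ v ∈ NH G Δ u := Iff.rfl

noncomputable def rt (v : V) : V := ((Hgr G Δ).connectedComponentMk v).out

lemma rt_reachable (v : V) : (Hgr G Δ).Reachable v (rt G Δ v) := by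
  have h : (Hgr G Δ).connectedComponentMk (rt G Δ v) = (Hgr G Δ).connectedComponentMk v := by
    exact Quot.out_eq _
  exact SimpleGraph.ConnectedComponent.exact h.symm

lemma rt_adj {u v : V} (h : (Hgr G Δ).Adj u v) : rt G Δ u = rt G Δ v := by
  unfold rt
  rw [SimpleGraph.ConnectedComponent.connectedComponentMk_eq_of_adj h]

noncomputable def dd (v : V) : ℕ := (Hgr G Δ).dist v (rt G Δ v)

noncomputable def key (v : V) : ℕ :=
  (idx (rt G Δ v) * BB V + (Fintype.card V - dd G Δ v)) * BB V + idx v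

lemma key_lt (v : V) : key G Δ v < BB V ^ 3 := by
  have h1 : idx (rt G Δ v) < BB V := lt_trans (idx_lt _) (Nat.lt_succ_self _)
  have h2 : Fintype.card V - dd G Δ v < BB V := lt_of_le_of_lt (Nat.sub_le _ _) (Nat.lt_succ_self _)
  have h3 : idx v < BB V := lt_trans (idx_lt _) (Nat.lt_succ_self _)
  have h5 : (idx (rt G Δ v) + 1) * BB V ≤ BB V * BB V := Nat.mul_le_mul_right _ h1
  unfold key
  calc (idx (rt G Δ v) * BB V + (Fintype.card V - dd G Δ v)) * BB V + idx v
      < (idx (rt G Δ v) * BB V + (Fintype.card V - dd G Δ v)) * BB V + BB V := by omega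
    _ = (idx (rt G Δ v) * BB V + (Fintype.card V - dd G Δ v) + 1) * BB V := by ring
    _ ≤ (BB V * BB V) * BB V := by
        refine Nat.mul_le_mul_right _ ?_
        nlinarith [h5, h2]
    _ = BB V ^ 3 := by ring

lemma key_inj {a b : V} (h : key G Δ a = key G Δ b) : a = b := by
  have ha : key G Δ a % BB V = idx a := by
    unfold key
    rw [Nat.mul_comm, Nat.mul_add_mod]
    exact Nat.mod_eq_of_lt (lt_trans (idx_lt _) (Nat.lt_succ_self _))
  have hb : key G Δ b % BB V = idx b := by
    unfold key
    rw [Nat.mul_comm, Nat.mul_add_mod]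
    exact Nat.mod_eq_of_lt (lt_trans (idx_lt _) (Nat.lt_succ_self _))
  exact idx_inj (by rw [← ha, ← hb, h])

lemma key_ne {a b : V} (h : a ≠ b) : key G Δ a ≠ key G Δ b :=
  fun he => h (key_inj G Δ he)

noncomputable def κ (u v : V) : ℕ :=
  if key G Δ u < key G Δ v then key G Δ u * BB V ^ 3 + key G Δ v
  else key G Δ v * BB V ^ 3 + key G Δ u

lemma κ_symm (u v : V) : κ G Δ u v = κ G Δ v u := by
  unfold κ
  rcases lt_trichotomy (key G Δ u) (key G Δ v) with h | h | h
  · rw [if_pos h, if_neg (lt_asymm h)]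
  · rw [h]
  · rw [if_neg (lt_asymm h), if_pos h]

lemma κ_sorted {u v : V} (h : key G Δ u < key G Δ v) :
    κ G Δ u v = key G Δ u * BB V ^ 3 + key G Δ v := if_pos h

noncomputable def EF : Finset (V × V) :=
  (univ ×ˢ univ).filter fun p => p.2 ∈ NH G Δ p.1 ∧ key G Δ p.1 < key G Δ p.2

lemma mem_EF {x y : V} :
    (x, y) ∈ EF G Δ ↔ y ∈ NH G Δ x ∧ key G Δ x < key G Δ y := by
  simp [EF, mem_filter]

lemma EF_or {u v : V} (h : v ∈ NH G Δ u) :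
    (u, v) ∈ EF G Δ ∨ (v, u) ∈ EF G Δ := by
  rcases lt_trichotomy (key G Δ u) (key G Δ v) with hl | he | hl
  · exact Or.inl ((mem_EF G Δ).2 ⟨h, hl⟩)
  · exact absurd (key_inj G Δ he) (Ne.symm (NH_ne G Δ h))
  · exact Or.inr ((mem_EF G Δ).2 ⟨NH_symm G Δ h, hl⟩)

lemma κ_inj_EF {x y x' y' : V} (h : (x, y) ∈ EF G Δ) (h' : (x', y') ∈ EF G Δ)
    (he : κ G Δ x y = κ G Δ x' y') : x = x' ∧ y = y' := by
  obtain ⟨-, hk⟩ := (mem_EF G Δ).1 h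
  obtain ⟨-, hk'⟩ := (mem_EF G Δ).1 h'
  rw [κ_sorted G Δ hk, κ_sorted G Δ hk'] at he
  have hy : key G Δ y = key G Δ y' := by
    have e1 : (key G Δ x * BB V ^ 3 + key G Δ y) % BB V ^ 3 = key G Δ y := by
      rw [Nat.mul_comm, Nat.mul_add_mod, Nat.mod_eq_of_lt (key_lt G Δ y)]
    have e2 : (key G Δ x' * BB V ^ 3 + key G Δ y') % BB V ^ 3 = key G Δ y' := by
      rw [Nat.mul_comm, Nat.mul_add_mod, Nat.mod_eq_of_lt (key_lt G Δ y')]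
    rw [← e1, ← e2, he]
  have hx : key G Δ x = key G Δ x' := by
    have h2 : key G Δ x * BB V ^ 3 = key G Δ x' * BB V ^ 3 := by omega
    exact Nat.eq_of_mul_eq_mul_right (pow_pos BB_pos 3) h2
  exact ⟨key_inj G Δ hx, key_inj G Δ hy⟩

/-- edges at a vertex strictly earlier than a given "stage" bound -/
lemma kappa_lt_of_key_lt {a w p q : V} (haw : w ∈ NH G Δ a)
    (hap : key G Δ a < key G Δ p) (hpq : key G Δ p < key G Δ q) :
    κ G Δ a w < κ G Δ p q := by
  have hwa : key G Δ w ≠ key G Δ a := key_ne G Δ (NH_ne G Δ haw)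
  have hM : key G Δ a < BB V ^ 3 := key_lt G Δ a
  have hMw : key G Δ w < BB V ^ 3 := key_lt G Δ w
  rw [κ_sorted G Δ hpq]
  have hbound : κ G Δ a w < (key G Δ a + 1) * BB V ^ 3 := by
    unfold κ
    rcases lt_or_gt_of_ne hwa with hlt | hgt
    · rw [if_neg (lt_asymm hlt)]
      calc key G Δ w * BB V ^ 3 + key G Δ a < key G Δ w * BB V ^ 3 + BB V ^ 3 := by omega
        _ = (key G Δ w + 1) * BB V ^ 3 := by ring
        _ ≤ (key G Δ a + 1) * BB V ^ 3 := by
            exact Nat.mul_le_mul_right _ (by omega)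
    · rw [if_pos hgt]
      calc key G Δ a * BB V ^ 3 + key G Δ w < key G Δ a * BB V ^ 3 + BB V ^ 3 := by omega
        _ = (key G Δ a + 1) * BB V ^ 3 := by ring
  calc κ G Δ a w < (key G Δ a + 1) * BB V ^ 3 := hbound
    _ ≤ key G Δ p * BB V ^ 3 := Nat.mul_le_mul_right _ (by omega)
    _ ≤ key G Δ p * BB V ^ 3 + key G Δ q := Nat.le_add_right _ _

/-- comparing two edges at the same vertex `v` -/
lemma kappa_edge_lt {v w T : V} (hw : w ∈ NH G Δ v)
    (hT : key G Δ v < key G Δ T) (hwT : key G Δ w < key G Δ T) :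
    κ G Δ v w < κ G Δ v T := by
  have hwv : key G Δ w ≠ key G Δ v := key_ne G Δ (NH_ne G Δ hw)
  rw [κ_sorted G Δ hT]
  unfold κ
  rcases lt_or_gt_of_ne hwv with hlt | hgt
  · rw [if_neg (lt_asymm hlt)]
    have h1 : key G Δ w * BB V ^ 3 + key G Δ v < (key G Δ w + 1) * BB V ^ 3 := by
      have := key_lt G Δ v; nlinarith
    calc key G Δ w * BB V ^ 3 + key G Δ v < (key G Δ w + 1) * BB V ^ 3 := h1
      _ ≤ key G Δ v * BB V ^ 3 := Nat.mul_le_mul_right _ (by omega)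
      _ ≤ key G Δ v * BB V ^ 3 + key G Δ T := Nat.le_add_right _ _
  · rw [if_pos hgt]
    omega

/-- every non-root vertex has an H-neighbor with larger key -/
lemma exists_up {v : V} (h : v ≠ rt G Δ v) :
    ∃ u ∈ NH G Δ v, key G Δ v < key G Δ u := by
  have hreach := rt_reachable G Δ v
  have hdpos : 0 < (Hgr G Δ).dist v (rt G Δ v) := hreach.pos_dist_of_ne h
  obtain ⟨p, hp⟩ := hreach.exists_walk_length_eq_dist
  have hcard : (Hgr G Δ).dist v (rt G Δ v) < Fintype.card V := by
    have hpath := SimpleGraph.Walk.isPath_of_length_eq_dist p hp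
    have := hpath.length_lt
    omega
  have hnil : ¬ p.Nil := by
    rw [SimpleGraph.Walk.not_nil_iff_lt_length]
    omega
  obtain ⟨u, hadj, q, hpe⟩ := SimpleGraph.Walk.not_nil_iff.mp hnil
  subst hpe
  · refine ⟨u, hadj, ?_⟩
    have hru : rt G Δ u = rt G Δ v := (rt_adj G Δ hadj).symm
    have h1 : (Hgr G Δ).dist u (rt G Δ v) ≤ q.length := SimpleGraph.dist_le q
    have hlen : q.length + 1 = (Hgr G Δ).dist v (rt G Δ v) := by
      simpa [SimpleGraph.Walk.length_cons] using hp
    have hddu : dd G Δ u < dd G Δ v := by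
      unfold dd
      rw [hru]
      omega
    have hddvn : dd G Δ v < Fintype.card V := hcard
    unfold key
    rw [hru]
    have h2 : Fintype.card V - dd G Δ v + 1 ≤ Fintype.card V - dd G Δ u := by omega
    have h3 : idx v < BB V := lt_trans (idx_lt _) (Nat.lt_succ_self _)
    calc (idx (rt G Δ v) * BB V + (Fintype.card V - dd G Δ v)) * BB V + idx v
        < (idx (rt G Δ v) * BB V + (Fintype.card V - dd G Δ v)) * BB V + BB V := by omega
      _ = (idx (rt G Δ v) * BB V + (Fintype.card V - dd G Δ v) + 1) * BB V := by ring
      _ ≤ (idx (rt G Δ v) * BB V + (Fintype.card V - dd G Δ u)) * BB V := by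
          refine Nat.mul_le_mul_right _ ?_
          omega
      _ ≤ (idx (rt G Δ v) * BB V + (Fintype.card V - dd G Δ u)) * BB V + idx u :=
          Nat.le_add_right _ _

noncomputable def amax {α : Type*} (f : α → ℕ) (s : Finset α) (h : s.Nonempty) : α :=
  (Finset.exists_max_image s f h).choose

lemma amax_mem {α : Type*} (f : α → ℕ) (s : Finset α) (h : s.Nonempty) :
    amax f s h ∈ s := (Finset.exists_max_image s f h).choose_spec.1

lemma le_amax {α : Type*} (f : α → ℕ) (s : Finset α) (h : s.Nonempty) :
    ∀ x ∈ s, f x ≤ f (amax f s h) :=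
  (Finset.exists_max_image s f h).choose_spec.2

noncomputable def amin {α : Type*} (f : α → ℕ) (s : Finset α) (h : s.Nonempty) : α :=
  (Finset.exists_min_image s f h).choose

lemma amin_mem {α : Type*} (f : α → ℕ) (s : Finset α) (h : s.Nonempty) :
    amin f s h ∈ s := (Finset.exists_min_image s f h).choose_spec.1

lemma amin_le {α : Type*} (f : α → ℕ) (s : Finset α) (h : s.Nonempty) :
    ∀ x ∈ s, f (amin f s h) ≤ f x :=
  (Finset.exists_min_image s f h).choose_spec.2

lemma amax_key_eq {s : Finset V} (h : s.Nonempty) {x : V} (hx : x ∈ s)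
    (hmax : ∀ w ∈ s, key G Δ w ≤ key G Δ x) : amax (key G Δ) s h = x := by
  apply key_inj G Δ
  exact le_antisymm (hmax _ (amax_mem _ _ _)) (le_amax _ _ _ _ hx)

noncomputable def downs (v : V) : Finset V :=
  (NH G Δ v).filter fun w => key G Δ w < key G Δ v

lemma mem_downs {v w : V} :
    w ∈ downs G Δ v ↔ w ∈ NH G Δ v ∧ key G Δ w < key G Δ v := by
  simp [downs, mem_filter]

def SFi (cc : V → V → ℕ) (v : V) : Finset ℕ := (G.neighborFinset v).image (cc v)

def Ki (cc : V → V → ℕ) (v z : V) : Finset ℕ := ((G.neighborFinset v).erase z).image (cc v)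

def small (s : Finset ℕ) : Finset ℕ := if s.card ≤ 1 then s else ∅

lemma small_card (s : Finset ℕ) : (small s).card ≤ 1 := by
  unfold small
  split
  · assumption
  · simp

lemma small_of_card_le {s : Finset ℕ} (h : s.card ≤ 1) : small s = s := if_pos h

noncomputable def Forb (cc : V → V → ℕ) (x y : V) : Finset ℕ :=
  SFi G cc x ∪ SFi G cc y ∪
  (if h : ((NH G Δ y).filter fun w => key G Δ w < key G Δ x).Nonempty then
    SFi G cc (amax (key G Δ) _ h) else ∅) ∪
  (if h : (downs G Δ x).Nonempty then
    small (SFi G cc (amax (key G Δ) _ h) \ Ki G cc x y) else ∅) ∪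
  (if h : (downs G Δ (rt G Δ x)).Nonempty then
    (if amax (key G Δ) _ h = x then small (SFi G cc (rt G Δ x) \ Ki G cc x y) else ∅) else ∅) ∪
  (if h : (downs G Δ (rt G Δ x)).Nonempty then
    (if amax (key G Δ) _ h = x then
      small (Ki G cc (rt G Δ x) x \
        (((G.neighborFinset x).erase (rt G Δ x)).erase y).image (cc x))
     else if amax (key G Δ) _ h = y then
      small (Ki G cc (rt G Δ x) (amax (key G Δ) _ h) \
        (((G.neighborFinset y).erase (rt G Δ x)).erase x).image (cc y))
     else if rt G Δ x = x then
      small (Ki G cc (amax (key G Δ) _ h) x \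
        (((G.neighborFinset x).erase (amax (key G Δ) _ h)).erase y).image (cc x))
     else if rt G Δ x = y then
      small (Ki G cc (amax (key G Δ) _ h) y \
        (((G.neighborFinset y).erase (amax (key G Δ) _ h)).erase x).image (cc y))
     else ∅) else ∅)

noncomputable def pickF (cc : V → V → ℕ) (t : ℕ) : ℕ :=
  if hE : ((EF G Δ).filter fun p => κ G Δ p.1 p.2 = t).Nonempty then
    if hne : (Finset.Icc 1 (Δ + 300) \ Forb G Δ cc hE.choose.1 hE.choose.2).Nonempty then
      (Finset.Icc 1 (Δ + 300) \ Forb G Δ cc hE.choose.1 hE.choose.2).min' hne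
    else 0
  else 0

variable (c : V → V → ℕ)

noncomputable def F (t : ℕ) : ℕ :=
  pickF G Δ (fun u v => if h : v ∈ NH G Δ u ∧ κ G Δ u v < t then F (κ G Δ u v) else c u v) t
termination_by t
decreasing_by exact h.2

noncomputable def cAt (t : ℕ) : V → V → ℕ := fun u v =>
  if h : v ∈ NH G Δ u ∧ κ G Δ u v < t then F G Δ c (κ G Δ u v) else c u v

lemma F_def (t : ℕ) : F G Δ c t = pickF G Δ (cAt G Δ c t) t := by
  rw [F]
  rfl

noncomputable def cN : V → V → ℕ := fun u v =>
  if v ∈ NH G Δ u then F G Δ c (κ G Δ u v) else c u v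

lemma cN_NH {u v : V} (h : v ∈ NH G Δ u) : cN G Δ c u v = F G Δ c (κ G Δ u v) := if_pos h

lemma cN_not_NH {u v : V} (h : v ∉ NH G Δ u) : cN G Δ c u v = c u v := if_neg h

lemma cAt_eq_cN {t : ℕ} {v : V} (hfin : ∀ w ∈ NH G Δ v, κ G Δ v w < t) :
    ∀ w, cAt G Δ c t v w = cN G Δ c v w := by
  intro w
  by_cases h : w ∈ NH G Δ v
  · rw [cN_NH G Δ c h]
    exact dif_pos ⟨h, hfin w h⟩
  · rw [cN_not_NH G Δ c h]
    exact dif_neg (by tauto)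

lemma image_cAt_eq {t : ℕ} {v : V} (S : Finset V)
    (hfin : ∀ w ∈ S, w ∈ NH G Δ v → κ G Δ v w < t) :
    S.image (cAt G Δ c t v) = S.image (cN G Δ c v) := by
  apply Finset.image_congr
  intro w hw
  by_cases h : w ∈ NH G Δ v
  · rw [cN_NH G Δ c h]
    exact dif_pos ⟨h, hfin w hw h⟩
  · rw [cN_not_NH G Δ c h]
    exact dif_neg (by tauto)

lemma forb_nonempty (cc : V → V → ℕ) {x y : V} (hxy : y ∈ NH G Δ x) :
    (Finset.Icc 1 (Δ + 300) \ Forb G Δ cc x y).Nonempty := by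
  obtain ⟨hadj, hly, hlx⟩ := (mem_NH G Δ).1 hxy
  have h1 : (SFi G cc x).card ≤ G.degree x := by
    unfold SFi
    exact le_trans (Finset.card_image_le) (le_of_eq (G.card_neighborFinset_eq_degree x))
  have h2 : (SFi G cc y).card ≤ G.degree y := by
    unfold SFi
    exact le_trans (Finset.card_image_le) (le_of_eq (G.card_neighborFinset_eq_degree y))
  have h3 : 3 * (if h : ((NH G Δ y).filter fun w => key G Δ w < key G Δ x).Nonempty then
      SFi G cc (amax (key G Δ) _ h) else ∅).card < Δ ∨
      (if h : ((NH G Δ y).filter fun w => key G Δ w < key G Δ x).Nonempty then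
      SFi G cc (amax (key G Δ) _ h) else ∅).card = 0 := by
    by_cases h : ((NH G Δ y).filter fun w => key G Δ w < key G Δ x).Nonempty
    · left
      rw [dif_pos h]
      have hmem := amax_mem (key G Δ) _ h
      rw [Finset.mem_filter] at hmem
      have hla : 3 * G.degree (amax (key G Δ) ((NH G Δ y).filter fun w => key G Δ w < key G Δ x) h) < Δ :=
        ((mem_NH G Δ).1 hmem.1).2.1
      have hc : (SFi G cc (amax (key G Δ) _ h)).card ≤
          G.degree (amax (key G Δ) ((NH G Δ y).filter fun w => key G Δ w < key G Δ x) h) := by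
        unfold SFi
        exact le_trans (Finset.card_image_le) (le_of_eq (G.card_neighborFinset_eq_degree _))
      omega
    · right
      rw [dif_neg h]
      simp
  have hcard : (Forb G Δ cc x y).card ≤ Δ + 2 := by
    unfold Forb
    refine le_trans (Finset.card_union_le _ _) ?_
    have e5 : (if h : (downs G Δ (rt G Δ x)).Nonempty then
        (if amax (key G Δ) _ h = x then
          small (Ki G cc (rt G Δ x) x \
            (((G.neighborFinset x).erase (rt G Δ x)).erase y).image (cc x))
         else if amax (key G Δ) _ h = y then
          small (Ki G cc (rt G Δ x) (amax (key G Δ) _ h) \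
            (((G.neighborFinset y).erase (rt G Δ x)).erase x).image (cc y))
         else if rt G Δ x = x then
          small (Ki G cc (amax (key G Δ) _ h) x \
            (((G.neighborFinset x).erase (amax (key G Δ) _ h)).erase y).image (cc x))
         else if rt G Δ x = y then
          small (Ki G cc (amax (key G Δ) _ h) y \
            (((G.neighborFinset y).erase (amax (key G Δ) _ h)).erase x).image (cc y))
         else ∅) else ∅).card ≤ 1 := by
      split
      · split
        · exact small_card _
        · split
          · exact small_card _
          · split
            · exact small_card _
            · split
              · exact small_card _
              · simp
      · simp
    have e4 : (if h : (downs G Δ (rt G Δ x)).Nonempty then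
        (if amax (key G Δ) _ h = x then small (SFi G cc (rt G Δ x) \ Ki G cc x y) else ∅)
        else ∅).card ≤ 1 := by
      split
      · split
        · exact small_card _
        · simp
      · simp
    have e3 : (if h : (downs G Δ x).Nonempty then
        small (SFi G cc (amax (key G Δ) _ h) \ Ki G cc x y) else ∅).card ≤ 1 := by
      split
      · exact small_card _
      · simp
    have t1 := Finset.card_union_le (SFi G cc x) (SFi G cc y)
    have t2 := Finset.card_union_le (SFi G cc x ∪ SFi G cc y)
      (if h : ((NH G Δ y).filter fun w => key G Δ w < key G Δ x).Nonempty then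
        SFi G cc (amax (key G Δ) _ h) else ∅)
    have t3 := Finset.card_union_le ((SFi G cc x ∪ SFi G cc y) ∪
      (if h : ((NH G Δ y).filter fun w => key G Δ w < key G Δ x).Nonempty then
        SFi G cc (amax (key G Δ) _ h) else ∅))
      (if h : (downs G Δ x).Nonempty then
        small (SFi G cc (amax (key G Δ) _ h) \ Ki G cc x y) else ∅)
    have t4 := Finset.card_union_le (((SFi G cc x ∪ SFi G cc y) ∪
      (if h : ((NH G Δ y).filter fun w => key G Δ w < key G Δ x).Nonempty then
        SFi G cc (amax (key G Δ) _ h) else ∅)) ∪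
      (if h : (downs G Δ x).Nonempty then
        small (SFi G cc (amax (key G Δ) _ h) \ Ki G cc x y) else ∅))
      (if h : (downs G Δ (rt G Δ x)).Nonempty then
        (if amax (key G Δ) _ h = x then small (SFi G cc (rt G Δ x) \ Ki G cc x y) else ∅)
        else ∅)
    omega
  have hIcc : (Finset.Icc 1 (Δ + 300)).card = Δ + 300 := by
    rw [Nat.card_Icc]
    omega
  have := Finset.card_le_card_sdiff_add_card (s := Finset.Icc 1 (Δ + 300))
    (t := Forb G Δ cc x y)
  rw [← Finset.card_pos]
  omega

lemma pickF_spec (cc : V → V → ℕ) {x y : V} (hxy : (x, y) ∈ EF G Δ) :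
    pickF G Δ cc (κ G Δ x y) ∈ Finset.Icc 1 (Δ + 300) \ Forb G Δ cc x y := by
  unfold pickF
  have hEne : ((EF G Δ).filter fun p => κ G Δ p.1 p.2 = κ G Δ x y).Nonempty :=
    ⟨(x, y), Finset.mem_filter.2 ⟨hxy, rfl⟩⟩
  rw [dif_pos hEne]
  have hcs := hEne.choose_spec
  rw [Finset.mem_filter] at hcs
  have hch : hEne.choose = (x, y) := by
    have h12 := κ_inj_EF G Δ hcs.1 hxy hcs.2
    exact Prod.ext h12.1 h12.2
  rw [hch]
  have hne : (Finset.Icc 1 (Δ + 300) \ Forb G Δ cc (x, y).1 (x, y).2).Nonempty :=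
    forb_nonempty G Δ cc (((mem_EF G Δ).1 hxy).1)
  rw [dif_pos hne]
  exact Finset.min'_mem _ _

lemma F_spec {x y : V} (hxy : (x, y) ∈ EF G Δ) :
    F G Δ c (κ G Δ x y) ∈
      Finset.Icc 1 (Δ + 300) \ Forb G Δ (cAt G Δ c (κ G Δ x y)) x y := by
  rw [F_def]
  exact pickF_spec G Δ _ hxy

lemma F_mem_Icc {x y : V} (hxy : (x, y) ∈ EF G Δ) :
    F G Δ c (κ G Δ x y) ∈ Finset.Icc 1 (Δ + 300) :=
  (Finset.mem_sdiff.1 (F_spec G Δ c hxy)).1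

lemma F_not_forb {x y : V} (hxy : (x, y) ∈ EF G Δ) :
    F G Δ c (κ G Δ x y) ∉ Forb G Δ (cAt G Δ c (κ G Δ x y)) x y :=
  (Finset.mem_sdiff.1 (F_spec G Δ c hxy)).2

section ForbSub

variable (cc : V → V → ℕ) (x y : V)

lemma forb_sub_x : SFi G cc x ⊆ Forb G Δ cc x y := by
  unfold Forb
  intro a ha
  simp only [Finset.mem_union]
  exact Or.inl (Or.inl (Or.inl (Or.inl (Or.inl ha))))

lemma forb_sub_y : SFi G cc y ⊆ Forb G Δ cc x y := by
  unfold Forb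
  intro a ha
  simp only [Finset.mem_union]
  exact Or.inl (Or.inl (Or.inl (Or.inl (Or.inr ha))))

lemma forb_sub_D1 (h : ((NH G Δ y).filter fun w => key G Δ w < key G Δ x).Nonempty) :
    SFi G cc (amax (key G Δ) _ h) ⊆ Forb G Δ cc x y := by
  unfold Forb
  intro a ha
  simp only [Finset.mem_union]
  refine Or.inl (Or.inl (Or.inl (Or.inr ?_)))
  rw [dif_pos h]
  exact ha

lemma forb_sub_D2 (h : (downs G Δ x).Nonempty) :
    small (SFi G cc (amax (key G Δ) _ h) \ Ki G cc x y) ⊆ Forb G Δ cc x y := by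
  unfold Forb
  intro a ha
  simp only [Finset.mem_union]
  refine Or.inl (Or.inl (Or.inr ?_))
  rw [dif_pos h]
  exact ha

lemma forb_sub_D4 (h : (downs G Δ (rt G Δ x)).Nonempty) (he : amax (key G Δ) _ h = x) :
    small (SFi G cc (rt G Δ x) \ Ki G cc x y) ⊆ Forb G Δ cc x y := by
  unfold Forb
  intro a ha
  simp only [Finset.mem_union]
  refine Or.inl (Or.inr ?_)
  rw [dif_pos h, if_pos he]
  exact ha

lemma forb_sub_D5m1 (h : (downs G Δ (rt G Δ x)).Nonempty) (he : amax (key G Δ) _ h = x) :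
    small (Ki G cc (rt G Δ x) x \
      (((G.neighborFinset x).erase (rt G Δ x)).erase y).image (cc x)) ⊆ Forb G Δ cc x y := by
  unfold Forb
  intro a ha
  simp only [Finset.mem_union]
  refine Or.inr ?_
  rw [dif_pos h, if_pos he]
  exact ha

lemma forb_sub_D5m2 (h : (downs G Δ (rt G Δ x)).Nonempty)
    (h1 : amax (key G Δ) _ h ≠ x) (he : amax (key G Δ) _ h = y) :
    small (Ki G cc (rt G Δ x) (amax (key G Δ) _ h) \
      (((G.neighborFinset y).erase (rt G Δ x)).erase x).image (cc y)) ⊆ Forb G Δ cc x y := by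
  unfold Forb
  intro a ha
  simp only [Finset.mem_union]
  refine Or.inr ?_
  rw [dif_pos h, if_neg h1, if_pos he]
  exact ha

lemma forb_sub_D5r1 (h : (downs G Δ (rt G Δ x)).Nonempty)
    (h1 : amax (key G Δ) _ h ≠ x) (h2 : amax (key G Δ) _ h ≠ y) (he : rt G Δ x = x) :
    small (Ki G cc (amax (key G Δ) _ h) x \
      (((G.neighborFinset x).erase (amax (key G Δ) _ h)).erase y).image (cc x)) ⊆
      Forb G Δ cc x y := by
  unfold Forb
  intro a ha
  simp only [Finset.mem_union]
  refine Or.inr ?_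
  rw [dif_pos h, if_neg h1, if_neg h2, if_pos he]
  exact ha

lemma forb_sub_D5r2 (h : (downs G Δ (rt G Δ x)).Nonempty)
    (h1 : amax (key G Δ) _ h ≠ x) (h2 : amax (key G Δ) _ h ≠ y)
    (h3 : rt G Δ x ≠ x) (he : rt G Δ x = y) :
    small (Ki G cc (amax (key G Δ) _ h) y \
      (((G.neighborFinset y).erase (amax (key G Δ) _ h)).erase x).image (cc y)) ⊆
      Forb G Δ cc x y := by
  unfold Forb
  intro a ha
  simp only [Finset.mem_union]
  refine Or.inr ?_
  rw [dif_pos h, if_neg h1, if_neg h2, if_neg h3, if_pos he]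
  exact ha

end ForbSub

lemma κ_minmax (u v : V) :
    κ G Δ u v = min (key G Δ u) (key G Δ v) * BB V ^ 3 + max (key G Δ u) (key G Δ v) := by
  unfold κ
  rcases lt_or_ge (key G Δ u) (key G Δ v) with h | h
  · rw [if_pos h, min_eq_left h.le, max_eq_right h.le]
  · rw [if_neg (not_lt_of_ge h), min_eq_right h, max_eq_left h]

lemma κ_inj_pair {u v w : V} (hv : key G Δ v ≠ key G Δ u) (hw : key G Δ w ≠ key G Δ u)
    (he : κ G Δ u v = κ G Δ u w) : v = w := by
  rw [κ_minmax, κ_minmax] at he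
  have hmax : max (key G Δ u) (key G Δ v) = max (key G Δ u) (key G Δ w) := by
    have e1 : (min (key G Δ u) (key G Δ v) * BB V ^ 3 + max (key G Δ u) (key G Δ v)) % BB V ^ 3
        = max (key G Δ u) (key G Δ v) := by
      rw [Nat.mul_comm, Nat.mul_add_mod, Nat.mod_eq_of_lt]
      exact max_lt (key_lt G Δ u) (key_lt G Δ v)
    have e2 : (min (key G Δ u) (key G Δ w) * BB V ^ 3 + max (key G Δ u) (key G Δ w)) % BB V ^ 3
        = max (key G Δ u) (key G Δ w) := by
      rw [Nat.mul_comm, Nat.mul_add_mod, Nat.mod_eq_of_lt]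
      exact max_lt (key_lt G Δ u) (key_lt G Δ w)
    rw [← e1, ← e2, he]
  have hmin : min (key G Δ u) (key G Δ v) = min (key G Δ u) (key G Δ w) := by
    have h2 : min (key G Δ u) (key G Δ v) * BB V ^ 3 = min (key G Δ u) (key G Δ w) * BB V ^ 3 := by
      omega
    exact Nat.eq_of_mul_eq_mul_right (pow_pos BB_pos 3) h2
  apply key_inj G Δ
  rcases le_or_gt (key G Δ u) (key G Δ v) with h1 | h1 <;>
    rcases le_or_gt (key G Δ u) (key G Δ w) with h2 | h2
  · rw [max_eq_right h1, max_eq_right h2] at hmax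
    omega
  · rw [max_eq_right h1, max_eq_left h2.le] at hmax
    omega
  · rw [max_eq_left h1.le, max_eq_right h2] at hmax
    omega
  · rw [min_eq_right h1.le, min_eq_right h2.le] at hmin
    omega

lemma cN_ne_of_lower (u v w : V) (hadjv : G.Adj u v) (hadjw : G.Adj u w)
    (hv : v ∈ NH G Δ u)
    (hlow : w ∉ NH G Δ u ∨ κ G Δ u w < κ G Δ u v) :
    cN G Δ c u v ≠ cN G Δ c u w := by
  have hval : cN G Δ c u v = F G Δ c (κ G Δ u v) := cN_NH G Δ c hv
  have hmemw : w ∈ G.neighborFinset u := (mem_neighborFinset G u w).2 hadjw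
  have hin : cN G Δ c u w ∈ SFi G (cAt G Δ c (κ G Δ u v)) u := by
    unfold SFi
    refine Finset.mem_image.2 ⟨w, hmemw, ?_⟩
    rcases hlow with h | h
    · rw [cN_not_NH G Δ c h]
      exact dif_neg (by tauto)
    · by_cases h' : w ∈ NH G Δ u
      · rw [cN_NH G Δ c h']
        exact dif_pos ⟨h', h⟩
      · rw [cN_not_NH G Δ c h']
        exact dif_neg (by tauto)
  rcases EF_or G Δ hv with hE | hE
  · have hforb := F_not_forb G Δ c hE
    rw [hval]
    intro hcontra
    exact hforb (forb_sub_x G Δ _ u v (hcontra ▸ hin))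
  · have hforb := F_not_forb G Δ c hE
    rw [hval, κ_symm]
    intro hcontra
    rw [κ_symm G Δ u v] at hin
    exact hforb (forb_sub_y G Δ _ v u (hcontra ▸ hin))

lemma cN_proper (u v w : V) (hadjv : G.Adj u v) (hadjw : G.Adj u w) (hvw : v ≠ w)
    (hproper : ∀ u v w : V, G.Adj u v → G.Adj u w → v ≠ w → c u v ≠ c u w) :
    cN G Δ c u v ≠ cN G Δ c u w := by
  by_cases hv : v ∈ NH G Δ u <;> by_cases hw : w ∈ NH G Δ u
  · have hκ : κ G Δ u v ≠ κ G Δ u w := by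
      intro he
      exact hvw (κ_inj_pair G Δ (key_ne G Δ (NH_ne G Δ hv)) (key_ne G Δ (NH_ne G Δ hw)) he)
    rcases lt_or_gt_of_ne hκ with h | h
    · exact (cN_ne_of_lower G Δ c u w v hadjw hadjv hw (Or.inr h)).symm
    · exact cN_ne_of_lower G Δ c u v w hadjv hadjw hv (Or.inr h)
  · exact cN_ne_of_lower G Δ c u v w hadjv hadjw hv (Or.inl hw)
  · exact (cN_ne_of_lower G Δ c u w v hadjw hadjv hw (Or.inl hv)).symm
  · rw [cN_not_NH G Δ c hv, cN_not_NH G Δ c hw]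
    exact hproper u v w hadjv hadjw hvw

lemma cN_symm (hsym : ∀ u v : V, c u v = c v u) (u v : V) :
    cN G Δ c u v = cN G Δ c v u := by
  by_cases h : v ∈ NH G Δ u
  · rw [cN_NH G Δ c h, cN_NH G Δ c (NH_symm G Δ h), κ_symm]
  · have h' : u ∉ NH G Δ v := fun hh => h (NH_symm G Δ hh)
    rw [cN_not_NH G Δ c h, cN_not_NH G Δ c h']
    exact hsym u v

lemma cN_mem_Icc (hcol : ∀ u v : V, G.Adj u v → c u v ∈ Finset.Icc 1 (Δ + 300))
    (u v : V) (hadj : G.Adj u v) : cN G Δ c u v ∈ Finset.Icc 1 (Δ + 300) := by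
  by_cases h : v ∈ NH G Δ u
  · rw [cN_NH G Δ c h]
    rcases EF_or G Δ h with hE | hE
    · exact F_mem_Icc G Δ c hE
    · rw [κ_symm]
      exact F_mem_Icc G Δ c hE
  · rw [cN_not_NH G Δ c h]
    exact hcol u v hadj

lemma card_image_cN (hproper : ∀ u v w : V, G.Adj u v → G.Adj u w → v ≠ w → c u v ≠ c u w)
    (u : V) : ((G.neighborFinset u).image (cN G Δ c u)).card = G.degree u := by
  rw [Finset.card_image_of_injOn, card_neighborFinset_eq_degree]
  intro a ha b hb hab
  by_contra hne
  exact cN_proper G Δ c u a b ((mem_neighborFinset G u a).1 ha)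
    ((mem_neighborFinset G u b).1 hb) hne hproper hab

lemma image_insert_erase (v T : V) (hT : T ∈ G.neighborFinset v) :
    (G.neighborFinset v).image (cN G Δ c v)
    = insert (cN G Δ c v T) (((G.neighborFinset v).erase T).image (cN G Δ c v)) := by
  conv_lhs => rw [← Finset.insert_erase hT]
  rw [Finset.image_insert]

lemma cN_not_in_erase
    (hproper : ∀ u v w : V, G.Adj u v → G.Adj u w → v ≠ w → c u v ≠ c u w)
    (v T : V) (hadjT : G.Adj v T) :
    cN G Δ c v T ∉ ((G.neighborFinset v).erase T).image (cN G Δ c v) := by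
  intro hmem
  obtain ⟨w, hw, hwe⟩ := Finset.mem_image.1 hmem
  obtain ⟨hwT, hwnbr⟩ := Finset.mem_erase.1 hw
  exact cN_proper G Δ c v w T ((mem_neighborFinset _ _ _).1 hwnbr) hadjT hwT hproper hwe

lemma insert_sdiff_self' {a : ℕ} {s : Finset ℕ} (h : a ∉ s) :
    insert a s \ s = {a} := by
  ext b
  simp only [Finset.mem_sdiff, Finset.mem_insert, Finset.mem_singleton]
  constructor
  · rintro ⟨hb | hb, hnb⟩
    · exact hb
    · exact absurd hb hnb
  · rintro rfl
    exact ⟨Or.inl rfl, h⟩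

lemma dl_A {x y : V} (hxy : (x, y) ∈ EF G Δ)
    (hW : ((NH G Δ y).filter fun w => key G Δ x < key G Δ w ∧ key G Δ w < key G Δ y).Nonempty) :
    (G.neighborFinset x).image (cN G Δ c x) ≠ (G.neighborFinset y).image (cN G Δ c y) := by
  obtain ⟨hyNH, hkxy⟩ := (mem_EF G Δ).1 hxy
  have hxNH : x ∈ NH G Δ y := NH_symm G Δ hyNH
  have hw₀W := amin_mem (key G Δ) _ hW
  obtain ⟨hw₀1, hw₀2, hw₀3⟩ := Finset.mem_filter.1 hw₀W
  set w₀ := amin (key G Δ) _ hW with hw0def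
  have hE' : (w₀, y) ∈ EF G Δ := (mem_EF G Δ).2 ⟨NH_symm G Δ hw₀1, hw₀3⟩
  have hDne : ((NH G Δ y).filter fun w => key G Δ w < key G Δ w₀).Nonempty :=
    ⟨x, Finset.mem_filter.2 ⟨hxNH, hw₀2⟩⟩
  have hamax : amax (key G Δ) _ hDne = x := by
    apply amax_key_eq
    · exact Finset.mem_filter.2 ⟨hxNH, hw₀2⟩
    · intro w hw
      obtain ⟨hw1, hw2⟩ := Finset.mem_filter.1 hw
      by_contra hgt
      push_neg at hgt
      have hwW : w ∈ (NH G Δ y).filter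
          fun w => key G Δ x < key G Δ w ∧ key G Δ w < key G Δ y :=
        Finset.mem_filter.2 ⟨hw1, hgt, lt_trans hw2 hw₀3⟩
      exact absurd (amin_le (key G Δ) _ hW w hwW) (not_le_of_gt hw2)
  have hforb := F_not_forb G Δ c hE'
  have hsub := forb_sub_D1 G Δ (cAt G Δ c (κ G Δ w₀ y)) w₀ y hDne
  rw [hamax] at hsub
  have hfin : SFi G (cAt G Δ c (κ G Δ w₀ y)) x = (G.neighborFinset x).image (cN G Δ c x) := by
    unfold SFi
    apply image_cAt_eq
    intro w _ hwNH
    exact kappa_lt_of_key_lt G Δ hwNH hw₀2 hw₀3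
  intro hcontra
  apply hforb
  apply hsub
  rw [hfin, hcontra]
  refine Finset.mem_image.2 ⟨w₀, NH_mem_nbr G Δ hw₀1, ?_⟩
  rw [cN_NH G Δ c hw₀1, κ_symm]

lemma dl_B (hproper : ∀ u v w : V, G.Adj u v → G.Adj u w → v ≠ w → c u v ≠ c u w)
    {x y : V} (hxy : (x, y) ∈ EF G Δ)
    (hdown : ∀ w ∈ NH G Δ y, key G Δ w < key G Δ y → key G Δ w ≤ key G Δ x)
    (hup : ∃ w ∈ NH G Δ y, key G Δ y < key G Δ w) :
    (G.neighborFinset x).image (cN G Δ c x) ≠ (G.neighborFinset y).image (cN G Δ c y) := by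
  obtain ⟨hyNH, hkxy⟩ := (mem_EF G Δ).1 hxy
  have hxNH : x ∈ NH G Δ y := NH_symm G Δ hyNH
  have hNHne : (NH G Δ y).Nonempty := ⟨x, hxNH⟩
  set T := amax (key G Δ) (NH G Δ y) hNHne with hTdef
  have hTNH : T ∈ NH G Δ y := amax_mem _ _ _
  obtain ⟨u', hu'1, hu'2⟩ := hup
  have hkyT : key G Δ y < key G Δ T := lt_of_lt_of_le hu'2 (le_amax _ _ _ u' hu'1)
  have hE'' : (y, T) ∈ EF G Δ := (mem_EF G Δ).2 ⟨hTNH, hkyT⟩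
  have hdne : (downs G Δ y).Nonempty := ⟨x, (mem_downs G Δ).2 ⟨hxNH, hkxy⟩⟩
  have hamax : amax (key G Δ) _ hdne = x := by
    apply amax_key_eq
    · exact (mem_downs G Δ).2 ⟨hxNH, hkxy⟩
    · intro w hw
      obtain ⟨hw1, hw2⟩ := (mem_downs G Δ).1 hw
      exact hdown w hw1 hw2
  have hforb := F_not_forb G Δ c hE''
  have hsub := forb_sub_D2 G Δ (cAt G Δ c (κ G Δ y T)) y T hdne
  rw [hamax] at hsub
  have hfinx : SFi G (cAt G Δ c (κ G Δ y T)) x = (G.neighborFinset x).image (cN G Δ c x) := by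
    unfold SFi
    apply image_cAt_eq
    intro w _ hwNH
    exact kappa_lt_of_key_lt G Δ hwNH hkxy hkyT
  have hfinK : Ki G (cAt G Δ c (κ G Δ y T)) y T
      = ((G.neighborFinset y).erase T).image (cN G Δ c y) := by
    unfold Ki
    apply image_cAt_eq
    intro w hw hwNH
    have hwT : w ≠ T := (Finset.mem_erase.1 hw).1
    have hwk : key G Δ w < key G Δ T :=
      lt_of_le_of_ne (le_amax _ _ _ w hwNH) (key_ne G Δ hwT)
    exact kappa_edge_lt G Δ hwNH hkyT hwk
  intro hcontra
  have hαK : F G Δ c (κ G Δ y T) ∉ ((G.neighborFinset y).erase T).image (cN G Δ c y) := by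
    rw [← cN_NH G Δ c hTNH]
    exact cN_not_in_erase G Δ c hproper y T (NH_adj G Δ hTNH)
  have hSy : (G.neighborFinset y).image (cN G Δ c y)
      = insert (F G Δ c (κ G Δ y T)) (((G.neighborFinset y).erase T).image (cN G Δ c y)) := by
    rw [← cN_NH G Δ c hTNH]
    exact image_insert_erase G Δ c y T (NH_mem_nbr G Δ hTNH)
  have hbad : SFi G (cAt G Δ c (κ G Δ y T)) x \ Ki G (cAt G Δ c (κ G Δ y T)) y T
      = {F G Δ c (κ G Δ y T)} := by
    rw [hfinx, hfinK, hcontra, hSy]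
    exact insert_sdiff_self' hαK
  apply hforb
  apply hsub
  rw [hbad, small_of_card_le (by simp)]
  exact Finset.mem_singleton_self _

lemma dl_C1 (hproper : ∀ u v w : V, G.Adj u v → G.Adj u w → v ≠ w → c u v ≠ c u w)
    {x y : V} (hxy : (x, y) ∈ EF G Δ)
    (hdown : ∀ w ∈ NH G Δ y, key G Δ w < key G Δ y → key G Δ w ≤ key G Δ x)
    (hnoup : ∀ w ∈ NH G Δ y, key G Δ w < key G Δ y)
    (hC1 : ∃ w ∈ NH G Δ x, key G Δ y < key G Δ w) :
    (G.neighborFinset x).image (cN G Δ c x) ≠ (G.neighborFinset y).image (cN G Δ c y) := by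
  obtain ⟨hyNH, hkxy⟩ := (mem_EF G Δ).1 hxy
  have hxNH : x ∈ NH G Δ y := NH_symm G Δ hyNH
  have hyrt : rt G Δ y = y := by
    by_contra hne
    obtain ⟨u, hu1, hu2⟩ := exists_up G Δ (fun he => hne he.symm)
    exact absurd (hnoup u hu1) (lt_asymm hu2)
  have hrtx : rt G Δ x = y := by
    have := rt_adj G Δ (show (Hgr G Δ).Adj x y from hyNH)
    rw [this, hyrt]
  have hNHxne : (NH G Δ x).Nonempty := ⟨y, hyNH⟩
  set Tx := amax (key G Δ) (NH G Δ x) hNHxne with hTxdef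
  have hTxNH : Tx ∈ NH G Δ x := amax_mem _ _ _
  obtain ⟨u', hu'1, hu'2⟩ := hC1
  have hkyTx : key G Δ y < key G Δ Tx := lt_of_lt_of_le hu'2 (le_amax _ _ _ u' hu'1)
  have hkxTx : key G Δ x < key G Δ Tx := lt_trans hkxy hkyTx
  have hE3 : (x, Tx) ∈ EF G Δ := (mem_EF G Δ).2 ⟨hTxNH, hkxTx⟩
  have hxd : x ∈ downs G Δ (rt G Δ x) := by
    rw [hrtx]
    exact (mem_downs G Δ).2 ⟨hxNH, hkxy⟩
  have hdne : (downs G Δ (rt G Δ x)).Nonempty := ⟨x, hxd⟩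
  have hamax : amax (key G Δ) _ hdne = x := by
    apply amax_key_eq
    · exact hxd
    · intro w hw
      rw [hrtx] at hw
      obtain ⟨hw1, hw2⟩ := (mem_downs G Δ).1 hw
      exact hdown w hw1 hw2
  have hforb := F_not_forb G Δ c hE3
  have hsub := forb_sub_D4 G Δ (cAt G Δ c (κ G Δ x Tx)) x Tx hdne hamax
  rw [hrtx] at hsub
  have hfiny : SFi G (cAt G Δ c (κ G Δ x Tx)) y = (G.neighborFinset y).image (cN G Δ c y) := by
    unfold SFi
    apply image_cAt_eq
    intro w _ hwNH
    have hwky : key G Δ w < key G Δ y := hnoup w hwNH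
    have hwkx : key G Δ w ≤ key G Δ x := hdown w hwNH hwky
    rcases eq_or_ne w x with rfl | hwx
    · rw [κ_symm]
      exact kappa_edge_lt G Δ hyNH hkxTx hkyTx
    · have hwlt : key G Δ w < key G Δ x := lt_of_le_of_ne hwkx (key_ne G Δ hwx)
      rw [κ_symm]
      exact kappa_lt_of_key_lt G Δ (NH_symm G Δ hwNH) hwlt hkxTx
  have hfinK : Ki G (cAt G Δ c (κ G Δ x Tx)) x Tx
      = ((G.neighborFinset x).erase Tx).image (cN G Δ c x) := by
    unfold Ki
    apply image_cAt_eq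
    intro w hw hwNH
    have hwT : w ≠ Tx := (Finset.mem_erase.1 hw).1
    have hwk : key G Δ w < key G Δ Tx :=
      lt_of_le_of_ne (le_amax _ _ _ w hwNH) (key_ne G Δ hwT)
    exact kappa_edge_lt G Δ hwNH hkxTx hwk
  intro hcontra
  have hαK : F G Δ c (κ G Δ x Tx) ∉ ((G.neighborFinset x).erase Tx).image (cN G Δ c x) := by
    rw [← cN_NH G Δ c hTxNH]
    exact cN_not_in_erase G Δ c hproper x Tx (NH_adj G Δ hTxNH)
  have hSx : (G.neighborFinset x).image (cN G Δ c x)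
      = insert (F G Δ c (κ G Δ x Tx)) (((G.neighborFinset x).erase Tx).image (cN G Δ c x)) := by
    rw [← cN_NH G Δ c hTxNH]
    exact image_insert_erase G Δ c x Tx (NH_mem_nbr G Δ hTxNH)
  have hbad : SFi G (cAt G Δ c (κ G Δ x Tx)) y \ Ki G (cAt G Δ c (κ G Δ x Tx)) x Tx
      = {F G Δ c (κ G Δ x Tx)} := by
    rw [hfiny, hfinK, ← hcontra, hSx]
    exact insert_sdiff_self' hαK
  apply hforb
  apply hsub
  rw [hbad, small_of_card_le (by simp)]
  exact Finset.mem_singleton_self _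

lemma dl_C2 (hproper : ∀ u v w : V, G.Adj u v → G.Adj u w → v ≠ w → c u v ≠ c u w)
    (hsym : ∀ u v : V, c u v = c v u)
    {x y : V} (hxy : (x, y) ∈ EF G Δ)
    (hdown : ∀ w ∈ NH G Δ y, key G Δ w < key G Δ y → key G Δ w ≤ key G Δ x)
    (hnoup : ∀ w ∈ NH G Δ y, key G Δ w < key G Δ y)
    (hiso2 : (∃ w ∈ NH G Δ x, w ≠ y) ∨ (∃ w ∈ NH G Δ y, w ≠ x)) :
    (G.neighborFinset x).image (cN G Δ c x) ≠ (G.neighborFinset y).image (cN G Δ c y) := by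
  obtain ⟨hyNH, hkxy⟩ := (mem_EF G Δ).1 hxy
  have hxNH : x ∈ NH G Δ y := NH_symm G Δ hyNH
  have hxyne : x ≠ y := (NH_ne G Δ hxNH)
  have hyrt : rt G Δ y = y := by
    by_contra hne
    obtain ⟨u, hu1, hu2⟩ := exists_up G Δ (fun he => hne he.symm)
    exact absurd (hnoup u hu1) (lt_asymm hu2)
  have hrtx : rt G Δ x = y := by
    have := rt_adj G Δ (show (Hgr G Δ).Adj x y from hyNH)
    rw [this, hyrt]
  set S := ((EF G Δ).filter fun p => p.1 = x ∨ p.2 = x ∨ p.1 = y ∨ p.2 = y).erase (x, y)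
    with hSdef
  have hmemS : ∀ u w : V, w ∈ NH G Δ u → (u = x ∨ u = y) → ¬(u = x ∧ w = y) →
      ¬(u = y ∧ w = x) → ∃ p ∈ S, (p = (u, w) ∨ p = (w, u)) := by
    intro u w hw hu hn1 hn2
    rcases EF_or G Δ hw with hE | hE
    · refine ⟨(u, w), ?_, Or.inl rfl⟩
      rw [hSdef, Finset.mem_erase]
      refine ⟨?_, Finset.mem_filter.2 ⟨hE, by tauto⟩⟩
      intro he
      rw [Prod.mk.injEq] at he
      exact hn1 he
    · refine ⟨(w, u), ?_, Or.inr rfl⟩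
      rw [hSdef, Finset.mem_erase]
      refine ⟨?_, Finset.mem_filter.2 ⟨hE, by tauto⟩⟩
      intro he
      rw [Prod.mk.injEq] at he
      exact hn2 ⟨he.2, he.1⟩
  have hS_EF : ∀ p ∈ S, (p.1, p.2) ∈ EF G Δ := by
    intro p hp
    rw [hSdef, Finset.mem_erase, Finset.mem_filter] at hp
    rw [Prod.mk.eta]
    exact hp.2.1
  have hSne : S.Nonempty := by
    rcases hiso2 with ⟨w, hw1, hw2⟩ | ⟨w, hw1, hw2⟩
    · obtain ⟨p, hp, -⟩ := hmemS x w hw1 (Or.inl rfl) (fun h => hw2 h.2) (fun h => hxyne h.1)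
      exact ⟨p, hp⟩
    · obtain ⟨p, hp, -⟩ := hmemS y w hw1 (Or.inr rfl) (fun h => hxyne h.1.symm)
        (fun h => hw2 h.2)
      exact ⟨p, hp⟩
  set g := amax (fun p => κ G Δ p.1 p.2) S hSne with hgdef
  have hgS : g ∈ S := amax_mem _ _ _
  have hgmax := le_amax (fun p => κ G Δ p.1 p.2) S hSne
  have hgEF : (g.1, g.2) ∈ EF G Δ := hS_EF g hgS
  have hgne : g ≠ (x, y) := by
    have := hgS
    rw [hSdef, Finset.mem_erase] at this
    exact this.1
  have htouch : g.1 = x ∨ g.2 = x ∨ g.1 = y ∨ g.2 = y := by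
    have := hgS
    rw [hSdef, Finset.mem_erase, Finset.mem_filter] at this
    exact this.2.2
  obtain ⟨hgNH, hgkey⟩ := (mem_EF G Δ).1 hgEF
  have hg12 : g.1 ≠ g.2 := fun he => absurd (congrArg (key G Δ) he) (ne_of_lt hgkey)
  have hstrict : ∀ u w : V, w ∈ NH G Δ u → (u = x ∨ u = y) → ¬(u = x ∧ w = y) →
      ¬(u = y ∧ w = x) → ¬(u = g.1 ∧ w = g.2) → ¬(u = g.2 ∧ w = g.1) →
      κ G Δ u w < κ G Δ g.1 g.2 := by
    intro u w hw hu hn1 hn2 hn3 hn4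
    obtain ⟨p, hp, hdisj⟩ := hmemS u w hw hu hn1 hn2
    have hκe : κ G Δ p.1 p.2 = κ G Δ u w := by
      rcases hdisj with rfl | rfl
      · rfl
      · exact κ_symm G Δ w u
    rw [← hκe]
    refine lt_of_le_of_ne (hgmax p hp) ?_
    intro heq
    have hpg := κ_inj_EF G Δ (hS_EF p hp) hgEF heq
    have hpg' : p = g := Prod.ext hpg.1 hpg.2
    rcases hdisj with rfl | rfl
    · rw [Prod.mk.injEq] at hpg'
      exact hn3 hpg'
    · rw [Prod.mk.injEq] at hpg'
      exact hn4 ⟨hpg'.2, hpg'.1⟩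
  have hg1y : g.1 ≠ y := by
    intro he
    have := hnoup g.2 (he ▸ hgNH)
    rw [he] at hgkey
    exact absurd this (lt_asymm hgkey)
  have hcompg : rt G Δ g.1 = y := by
    rcases htouch with h | h | h | h
    · rw [h, hrtx]
    · rw [rt_adj G Δ (show (Hgr G Δ).Adj g.1 g.2 from hgNH), h, hrtx]
    · exact absurd h hg1y
    · rw [rt_adj G Δ (show (Hgr G Δ).Adj g.1 g.2 from hgNH), h, hyrt]
  have hxd : x ∈ downs G Δ (rt G Δ g.1) := by
    rw [hcompg]
    exact (mem_downs G Δ).2 ⟨hxNH, hkxy⟩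
  have hdng : (downs G Δ (rt G Δ g.1)).Nonempty := ⟨x, hxd⟩
  have hamaxg : amax (key G Δ) _ hdng = x := by
    apply amax_key_eq
    · exact hxd
    · intro w hw
      rw [hcompg] at hw
      obtain ⟨hw1, hw2⟩ := (mem_downs G Δ).1 hw
      exact hdown w hw1 hw2
  have hxdx : x ∈ downs G Δ (rt G Δ x) := by
    rw [hrtx]
    exact (mem_downs G Δ).2 ⟨hxNH, hkxy⟩
  have hdnx : (downs G Δ (rt G Δ x)).Nonempty := ⟨x, hxdx⟩
  have hamaxx : amax (key G Δ) _ hdnx = x := by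
    apply amax_key_eq
    · exact hxdx
    · intro w hw
      rw [hrtx] at hw
      obtain ⟨hw1, hw2⟩ := (mem_downs G Δ).1 hw
      exact hdown w hw1 hw2
  -- suppose the two palettes coincide
  intro hcontra
  have hγKx : cN G Δ c x y ∉ ((G.neighborFinset x).erase y).image (cN G Δ c x) :=
    cN_not_in_erase G Δ c hproper x y (NH_adj G Δ hyNH)
  have hsymxy : cN G Δ c y x = cN G Δ c x y := (cN_symm G Δ c hsym x y).symm
  have hγKy : cN G Δ c x y ∉ ((G.neighborFinset y).erase x).image (cN G Δ c y) := by
    rw [← hsymxy]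
    exact cN_not_in_erase G Δ c hproper y x (NH_adj G Δ hxNH)
  have hKK : ((G.neighborFinset x).erase y).image (cN G Δ c x)
      = ((G.neighborFinset y).erase x).image (cN G Δ c y) := by
    have h1 : insert (cN G Δ c x y) (((G.neighborFinset x).erase y).image (cN G Δ c x))
        = insert (cN G Δ c x y) (((G.neighborFinset y).erase x).image (cN G Δ c y)) := by
      rw [← image_insert_erase G Δ c x y (NH_mem_nbr G Δ hyNH), hcontra,
        image_insert_erase G Δ c y x (NH_mem_nbr G Δ hxNH), hsymxy]
    have h2 := congrArg (fun s => Finset.erase s (cN G Δ c x y)) h1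
    simpa [Finset.erase_insert hγKx, Finset.erase_insert hγKy] using h2
  rcases htouch with h1 | h1 | h1 | h1
  · -- branch: g = (x, z) with z := g.2
    rw [h1] at hgEF hgNH hgkey hstrict
    have hzy : g.2 ≠ y := fun he => hgne (Prod.ext h1 he)
    have hzx : g.2 ≠ x := NH_ne G Δ hgNH
    have hF := F_not_forb G Δ c hgEF
    have hsub := forb_sub_D5m1 G Δ (cAt G Δ c (κ G Δ x g.2)) x g.2 hdnx hamaxx
    rw [hrtx] at hsub
    have hval : cN G Δ c x g.2 = F G Δ c (κ G Δ x g.2) := cN_NH G Δ c hgNH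
    have hfin1 : Ki G (cAt G Δ c (κ G Δ x g.2)) y x
        = ((G.neighborFinset y).erase x).image (cN G Δ c y) := by
      unfold Ki
      apply image_cAt_eq
      intro w hw hwNH
      have hwx : w ≠ x := (Finset.mem_erase.1 hw).1
      exact hstrict y w hwNH (Or.inr rfl) (fun h => hxyne h.1.symm) (fun h => hwx h.2)
        (fun h => hxyne h.1.symm) (fun h => hzy h.1.symm)
    have hfin2 : (((G.neighborFinset x).erase y).erase g.2).image (cAt G Δ c (κ G Δ x g.2) x)
        = (((G.neighborFinset x).erase y).erase g.2).image (cN G Δ c x) := by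
      apply image_cAt_eq
      intro w hw hwNH
      have hwz : w ≠ g.2 := (Finset.mem_erase.1 hw).1
      have hwy : w ≠ y := (Finset.mem_erase.1 (Finset.mem_erase.1 hw).2).1
      exact hstrict x w hwNH (Or.inl rfl) (fun h => hwy h.2) (fun h => hxyne h.1)
        (fun h => hwz h.2) (fun h => hzx h.1.symm)
    have hz' : g.2 ∈ (G.neighborFinset x).erase y :=
      Finset.mem_erase.2 ⟨hzy, NH_mem_nbr G Δ hgNH⟩
    have hKx2 : ((G.neighborFinset x).erase y).image (cN G Δ c x)
        = insert (cN G Δ c x g.2)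
          ((((G.neighborFinset x).erase y).erase g.2).image (cN G Δ c x)) := by
      conv_lhs => rw [← Finset.insert_erase hz']
      rw [Finset.image_insert]
    have hαP : cN G Δ c x g.2 ∉
        (((G.neighborFinset x).erase y).erase g.2).image (cN G Δ c x) := by
      intro hmem
      obtain ⟨w, hw, hwe⟩ := Finset.mem_image.1 hmem
      have hwz : w ≠ g.2 := (Finset.mem_erase.1 hw).1
      have hwnbr : w ∈ G.neighborFinset x :=
        Finset.mem_of_mem_erase (Finset.mem_of_mem_erase hw)
      exact cN_proper G Δ c x w g.2 ((mem_neighborFinset _ _ _).1 hwnbr)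
        (NH_adj G Δ hgNH) hwz hproper hwe
    have hbad : Ki G (cAt G Δ c (κ G Δ x g.2)) y x \
        (((G.neighborFinset x).erase y).erase g.2).image (cAt G Δ c (κ G Δ x g.2) x)
        = {cN G Δ c x g.2} := by
      rw [hfin1, hfin2, ← hKK, hKx2]
      exact insert_sdiff_self' hαP
    apply hF
    apply hsub
    rw [hbad, hval, small_of_card_le (by simp)]
    exact Finset.mem_singleton_self _
  · -- branch: g = (z, x) with z := g.1
    rw [h1] at hgEF hgNH hgkey hstrict
    have hz : g.1 ∈ NH G Δ x := NH_symm G Δ hgNH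
    have hzy : g.1 ≠ y := hg1y
    have hzx : g.1 ≠ x := (NH_ne G Δ hgNH).symm
    have hF := F_not_forb G Δ c hgEF
    have hne1 : amax (key G Δ) _ hdng ≠ g.1 := by
      rw [hamaxg]
      exact fun he => hzx he.symm
    have hsub := forb_sub_D5m2 G Δ (cAt G Δ c (κ G Δ g.1 x)) g.1 x hdng hne1 hamaxg
    rw [hamaxg, hcompg] at hsub
    have hval : cN G Δ c x g.1 = F G Δ c (κ G Δ g.1 x) := by
      rw [cN_NH G Δ c hz, κ_symm]
    have hfin1 : Ki G (cAt G Δ c (κ G Δ g.1 x)) y x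
        = ((G.neighborFinset y).erase x).image (cN G Δ c y) := by
      unfold Ki
      apply image_cAt_eq
      intro w hw hwNH
      have hwx : w ≠ x := (Finset.mem_erase.1 hw).1
      exact hstrict y w hwNH (Or.inr rfl) (fun h => hxyne h.1.symm) (fun h => hwx h.2)
        (fun h => hzy h.1.symm) (fun h => hxyne h.1.symm)
    have hfin2 : (((G.neighborFinset x).erase y).erase g.1).image (cAt G Δ c (κ G Δ g.1 x) x)
        = (((G.neighborFinset x).erase y).erase g.1).image (cN G Δ c x) := by
      apply image_cAt_eq
      intro w hw hwNH
      have hwz : w ≠ g.1 := (Finset.mem_erase.1 hw).1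
      have hwy : w ≠ y := (Finset.mem_erase.1 (Finset.mem_erase.1 hw).2).1
      exact hstrict x w hwNH (Or.inl rfl) (fun h => hwy h.2) (fun h => hxyne h.1)
        (fun h => hzx h.1.symm) (fun h => hwz h.2)
    have hz' : g.1 ∈ (G.neighborFinset x).erase y :=
      Finset.mem_erase.2 ⟨hzy, NH_mem_nbr G Δ hz⟩
    have hKx2 : ((G.neighborFinset x).erase y).image (cN G Δ c x)
        = insert (cN G Δ c x g.1)
          ((((G.neighborFinset x).erase y).erase g.1).image (cN G Δ c x)) := by
      conv_lhs => rw [← Finset.insert_erase hz']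
      rw [Finset.image_insert]
    have hαP : cN G Δ c x g.1 ∉
        (((G.neighborFinset x).erase y).erase g.1).image (cN G Δ c x) := by
      intro hmem
      obtain ⟨w, hw, hwe⟩ := Finset.mem_image.1 hmem
      have hwz : w ≠ g.1 := (Finset.mem_erase.1 hw).1
      have hwnbr : w ∈ G.neighborFinset x :=
        Finset.mem_of_mem_erase (Finset.mem_of_mem_erase hw)
      exact cN_proper G Δ c x w g.1 ((mem_neighborFinset _ _ _).1 hwnbr)
        (NH_adj G Δ hz) hwz hproper hwe
    have hbad : Ki G (cAt G Δ c (κ G Δ g.1 x)) y x \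
        (((G.neighborFinset x).erase y).erase g.1).image (cAt G Δ c (κ G Δ g.1 x) x)
        = {cN G Δ c x g.1} := by
      rw [hfin1, hfin2, ← hKK, hKx2]
      exact insert_sdiff_self' hαP
    apply hF
    apply hsub
    rw [hbad, hval, small_of_card_le (by simp)]
    exact Finset.mem_singleton_self _
  · exact absurd h1 hg1y
  · -- branch: g = (z, y) with z := g.1
    rw [h1] at hgEF hgNH hgkey hstrict
    have hz : g.1 ∈ NH G Δ y := NH_symm G Δ hgNH
    have hzx : g.1 ≠ x := fun he => hgne (Prod.ext he h1)
    have hzy : g.1 ≠ y := hg1y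
    have hF := F_not_forb G Δ c hgEF
    have hne1 : amax (key G Δ) _ hdng ≠ g.1 := by
      rw [hamaxg]
      exact fun he => hzx he.symm
    have hne2 : amax (key G Δ) _ hdng ≠ y := by
      rw [hamaxg]
      exact hxyne
    have hne3 : rt G Δ g.1 ≠ g.1 := by
      rw [hcompg]
      exact fun he => hzy he.symm
    have he4 : rt G Δ g.1 = y := hcompg
    have hsub := forb_sub_D5r2 G Δ (cAt G Δ c (κ G Δ g.1 y)) g.1 y hdng hne1 hne2 hne3 he4
    rw [hamaxg] at hsub
    have hval : cN G Δ c y g.1 = F G Δ c (κ G Δ g.1 y) := by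
      rw [cN_NH G Δ c hz, κ_symm]
    have hfin1 : Ki G (cAt G Δ c (κ G Δ g.1 y)) x y
        = ((G.neighborFinset x).erase y).image (cN G Δ c x) := by
      unfold Ki
      apply image_cAt_eq
      intro w hw hwNH
      have hwy : w ≠ y := (Finset.mem_erase.1 hw).1
      exact hstrict x w hwNH (Or.inl rfl) (fun h => hwy h.2) (fun h => hxyne h.1)
        (fun h => hzx h.1.symm) (fun h => hxyne h.1)
    have hfin2 : (((G.neighborFinset y).erase x).erase g.1).image (cAt G Δ c (κ G Δ g.1 y) y)
        = (((G.neighborFinset y).erase x).erase g.1).image (cN G Δ c y) := by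
      apply image_cAt_eq
      intro w hw hwNH
      have hwz : w ≠ g.1 := (Finset.mem_erase.1 hw).1
      have hwx : w ≠ x := (Finset.mem_erase.1 (Finset.mem_erase.1 hw).2).1
      exact hstrict y w hwNH (Or.inr rfl) (fun h => hxyne h.1.symm) (fun h => hwx h.2)
        (fun h => hzy h.1.symm) (fun h => hwz h.2)
    have hz' : g.1 ∈ (G.neighborFinset y).erase x :=
      Finset.mem_erase.2 ⟨hzx, NH_mem_nbr G Δ hz⟩
    have hKy2 : ((G.neighborFinset y).erase x).image (cN G Δ c y)
        = insert (cN G Δ c y g.1)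
          ((((G.neighborFinset y).erase x).erase g.1).image (cN G Δ c y)) := by
      conv_lhs => rw [← Finset.insert_erase hz']
      rw [Finset.image_insert]
    have hαP : cN G Δ c y g.1 ∉
        (((G.neighborFinset y).erase x).erase g.1).image (cN G Δ c y) := by
      intro hmem
      obtain ⟨w, hw, hwe⟩ := Finset.mem_image.1 hmem
      have hwz : w ≠ g.1 := (Finset.mem_erase.1 hw).1
      have hwnbr : w ∈ G.neighborFinset y :=
        Finset.mem_of_mem_erase (Finset.mem_of_mem_erase hw)
      exact cN_proper G Δ c y w g.1 ((mem_neighborFinset _ _ _).1 hwnbr)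
        (NH_adj G Δ hz) hwz hproper hwe
    have hbad : Ki G (cAt G Δ c (κ G Δ g.1 y)) x y \
        (((G.neighborFinset y).erase x).erase g.1).image (cAt G Δ c (κ G Δ g.1 y) y)
        = {cN G Δ c y g.1} := by
      rw [hfin1, hfin2, hKK, hKy2]
      exact insert_sdiff_self' hαP
    apply hF
    apply hsub
    rw [hbad, hval, small_of_card_le (by simp)]
    exact Finset.mem_singleton_self _

lemma main_pair (hproper : ∀ u v w : V, G.Adj u v → G.Adj u w → v ≠ w → c u v ≠ c u w)
    (hsym : ∀ u v : V, c u v = c v u)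
    (hiso : ∀ u v : V, G.Adj u v → 3 * G.degree u < Δ → 3 * G.degree v < Δ →
      2 ≤ ((G.neighborFinset u).filter fun w => 3 * G.degree w < Δ).card ∨
      2 ≤ ((G.neighborFinset v).filter fun w => 3 * G.degree w < Δ).card)
    {x y : V} (hxy : (x, y) ∈ EF G Δ) :
    (G.neighborFinset x).image (cN G Δ c x) ≠ (G.neighborFinset y).image (cN G Δ c y) := by
  by_cases hA : ((NH G Δ y).filter fun w =>
      key G Δ x < key G Δ w ∧ key G Δ w < key G Δ y).Nonempty
  · exact dl_A G Δ c hxy hA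
  obtain ⟨hyNH, hkxy⟩ := (mem_EF G Δ).1 hxy
  have hxNH : x ∈ NH G Δ y := NH_symm G Δ hyNH
  have hdown : ∀ w ∈ NH G Δ y, key G Δ w < key G Δ y → key G Δ w ≤ key G Δ x := by
    intro w hw hwy
    by_contra hgt
    push_neg at hgt
    exact hA ⟨w, Finset.mem_filter.2 ⟨hw, hgt, hwy⟩⟩
  by_cases hB : ∃ w ∈ NH G Δ y, key G Δ y < key G Δ w
  · exact dl_B G Δ c hproper hxy hdown hB
  push_neg at hB
  have hnoup : ∀ w ∈ NH G Δ y, key G Δ w < key G Δ y := fun w hw =>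
    lt_of_le_of_ne (hB w hw) (key_ne G Δ (NH_ne G Δ hw))
  have hlx : 3 * G.degree x < Δ := ((mem_NH G Δ).1 hyNH).2.2
  have hly : 3 * G.degree y < Δ := ((mem_NH G Δ).1 hyNH).2.1
  have hNHx_eq : (G.neighborFinset x).filter (fun w => 3 * G.degree w < Δ) = NH G Δ x := by
    unfold NH
    apply Finset.filter_congr
    intro w _
    simp [hlx]
  have hNHy_eq : (G.neighborFinset y).filter (fun w => 3 * G.degree w < Δ) = NH G Δ y := by
    unfold NH
    apply Finset.filter_congr
    intro w _
    simp [hly]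
  have hiso2 : (∃ w ∈ NH G Δ x, w ≠ y) ∨ (∃ w ∈ NH G Δ y, w ≠ x) := by
    rcases hiso x y (NH_adj G Δ hyNH) hlx hly with h2 | h2
    · left
      rw [hNHx_eq] at h2
      exact Finset.exists_mem_ne (by omega) y
    · right
      rw [hNHy_eq] at h2
      exact Finset.exists_mem_ne (by omega) x
  exact dl_C2 G Δ c hproper hsym hxy hdown hnoup hiso2

end AVD

/-- Let `G` have maximum degree `Δ ≥ 4` and let `H` be the subgraph
induced by the vertices of degree `< Δ/3` (i.e. `3·deg < Δ`).  Assume `H` has no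
isolated edges (every edge of `H` has an endpoint whose degree inside `H` is at
least `2`), and assume there is a proper edge coloring of `G` with colors
`{1, …, Δ+300}` distinguishing every pair of adjacent vertices both of degree at
least `Δ/3`.  Then `G` has an avd-coloring with colors `{1, …, Δ+300}`. -/
theorem avd_of_high_degree_distinguishing {V : Type*} [Fintype V] [DecidableEq V]
    (G : SimpleGraph V) [DecidableRel G.Adj] (Δ : ℕ)
    (hΔ : G.maxDegree = Δ) (hΔ4 : 4 ≤ Δ)
    (hHNoIsolatedEdge : ∀ u v : V, G.Adj u v →
      3 * G.degree u < Δ → 3 * G.degree v < Δ →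
      2 ≤ ((G.neighborFinset u).filter fun w => 3 * G.degree w < Δ).card ∨
      2 ≤ ((G.neighborFinset v).filter fun w => 3 * G.degree w < Δ).card)
    (c : V → V → ℕ)
    (hsym : ∀ u v : V, c u v = c v u)
    (hcol : ∀ u v : V, G.Adj u v → c u v ∈ Finset.Icc 1 (Δ + 300))
    (hproper : ∀ u v w : V, G.Adj u v → G.Adj u w → v ≠ w → c u v ≠ c u w)
    (hdist : ∀ u v : V, G.Adj u v → Δ ≤ 3 * G.degree u → Δ ≤ 3 * G.degree v →
      (G.neighborFinset u).image (c u) ≠ (G.neighborFinset v).image (c v)) :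
    ∃ c' : V → V → ℕ,
      (∀ u v : V, c' u v = c' v u) ∧
      (∀ u v : V, G.Adj u v → c' u v ∈ Finset.Icc 1 (Δ + 300)) ∧
      (∀ u v w : V, G.Adj u v → G.Adj u w → v ≠ w → c' u v ≠ c' u w) ∧
      (∀ u v : V, G.Adj u v →
        (G.neighborFinset u).image (c' u) ≠ (G.neighborFinset v).image (c' v)) := by
  refine ⟨AVD.cN G Δ c, AVD.cN_symm G Δ c hsym, AVD.cN_mem_Icc G Δ c hcol, ?_, ?_⟩
  · intro u v w huv huw hvw
    exact AVD.cN_proper G Δ c u v w huv huw hvw hproper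
  · intro u v huv
    by_cases hlu : 3 * G.degree u < Δ <;> by_cases hlv : 3 * G.degree v < Δ
    · have hNH : v ∈ AVD.NH G Δ u := (AVD.mem_NH G Δ).2 ⟨huv, hlv, hlu⟩
      rcases AVD.EF_or G Δ hNH with hE | hE
      · exact AVD.main_pair G Δ c hproper hsym hHNoIsolatedEdge hE
      · exact (AVD.main_pair G Δ c hproper hsym hHNoIsolatedEdge hE).symm
    · intro hcontra
      have h1 := AVD.card_image_cN G Δ c hproper u
      have h2 := AVD.card_image_cN G Δ c hproper v
      rw [hcontra] at h1
      have : G.degree u = G.degree v := h1.symm.trans h2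
      omega
    · intro hcontra
      have h1 := AVD.card_image_cN G Δ c hproper u
      have h2 := AVD.card_image_cN G Δ c hproper v
      rw [hcontra] at h1
      have : G.degree u = G.degree v := h1.symm.trans h2
      omega
    · have hu : (G.neighborFinset u).image (AVD.cN G Δ c u)
          = (G.neighborFinset u).image (c u) := by
        apply Finset.image_congr
        intro w _
        apply AVD.cN_not_NH
        intro hNH
        exact hlu ((AVD.mem_NH G Δ).1 hNH).2.2
      have hv : (G.neighborFinset v).image (AVD.cN G Δ c v)
          = (G.neighborFinset v).image (c v) := by
        apply Finset.image_congr
        intro w _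
        apply AVD.cN_not_NH
        intro hNH
        exact hlv ((AVD.mem_NH G Δ).1 hNH).2.2
      rw [hu, hv]
      exact hdist u v huv (by omega) (by omega)
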